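/- Let R ∈ ℤ and let (a_k)_{k∈ℕ}, (b_k)_{k∈ℕ}, (n_k)_{k∈ℕ} be sequences of integers such that for every k: 1 ≤ a_k, 2a_k ≤ R, |b_k| < a_k and 0 ≤ n_k < a_k. Define a sequence (m_k)_{k∈ℕ} of integers by an arbitrary m_0 ∈ ℤ and m_{k+1} = (m_k·b_k + n_k) div a_k, i.e. m_{k+1} is the unique integer q with m_k·b_k + n_k = q·a_k + r for some r with 0 ≤ r < a_k. Then |m_k| ≤ R for every k ≥ |m_0|. -/
import Mathlib

/-- One step of the cocycle quotient map: the new value is bounded by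
`max (|m| - 1) R`. -/
lemma cocycle_step (a b n m q r R : ℤ) (ha : 1 ≤ a) (haR : 2 * a ≤ R)
    (hb : |b| < a) (hn0 : 0 ≤ n) (hn1 : n < a) (hr0 : 0 ≤ r) (hr1 : r < a)
    (heq : m * b + n = q * a + r) : |q| ≤ max (|m| - 1) R := by
  have hma : 0 ≤ |m| := abs_nonneg m
  have hba : 0 ≤ |b| := abs_nonneg b
  have h1 : |q| * a ≤ (|m| + 1) * (a - 1) := by
    have hqa : q * a = m * b + (n - r) := by linarith
    have h2 : |q * a| ≤ |m * b| + |n - r| := by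
      rw [hqa]; exact abs_add_le _ _
    rw [abs_mul, abs_mul, abs_of_pos (by linarith : (0:ℤ) < a)] at h2
    have h3 : |m| * |b| ≤ |m| * (a - 1) := by
      apply mul_le_mul_of_nonneg_left (by linarith) hma
    have h4 : |n - r| ≤ a - 1 := by
      rw [abs_le]; constructor <;> linarith
    nlinarith
  rcases le_or_gt (|m|) (2 * a - 1) with hc | hc
  · -- small case: |q| ≤ R
    have h5 : |q| * a < R * a := by nlinarith
    have : |q| < R := lt_of_mul_lt_mul_right h5 (by linarith)
    exact le_trans this.le (le_max_right _ _)
  · -- big case: |q| ≤ |m| - 1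
    have h5 : |q| * a ≤ (|m| - 1) * a := by nlinarith
    have : |q| ≤ |m| - 1 := le_of_mul_le_mul_right h5 (by linarith)
    exact le_trans this (le_max_left _ _)

/-- Proposition 6.4 (arithmetic content): iterating the cocycle quotient
map along parameters `a k ≥ 1`, `2 * a k ≤ R`, `|b k| < a k`,
`0 ≤ n k < a k`, starting from any `m 0`, the sequence satisfies
`|m k| ≤ R` for every `k ≥ |m 0|`. -/
theorem cocycle_contracting (R : ℤ) (a b n m : ℕ → ℤ)
    (ha : ∀ k, 1 ≤ a k) (haR : ∀ k, 2 * a k ≤ R)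
    (hb : ∀ k, |b k| < a k)
    (hn : ∀ k, 0 ≤ n k ∧ n k < a k)
    (hm : ∀ k, ∃ r : ℤ, 0 ≤ r ∧ r < a k ∧
      m k * b k + n k = m (k + 1) * a k + r) :
    ∀ k : ℕ, |m 0| ≤ (k : ℤ) → |m k| ≤ R := by
  have hR : (0:ℤ) ≤ R := by have := haR 0; have := ha 0; linarith
  have main : ∀ k : ℕ, |m k| ≤ max (|m 0| - k) R := by
    intro k
    induction k with
    | zero => simp only [Nat.cast_zero, sub_zero]; exact le_max_left (|m 0|) R
    | succ k ih =>
      obtain ⟨r, hr0, hr1, heq⟩ := hm k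
      have hstep := cocycle_step (a k) (b k) (n k) (m k) (m (k + 1)) r R
        (ha k) (haR k) (hb k) (hn k).1 (hn k).2 hr0 hr1 heq
      refine le_trans hstep (max_le ?_ (le_max_right _ _))
      rcases le_max_iff.mp ih with h | h
      · refine le_trans ?_ (le_max_left _ _)
        push_cast
        linarith
      · exact le_trans (by linarith) (le_max_right _ _)
  intro k hk
  exact le_trans (main k) (max_le (by linarith) le_rfl)
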